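/- arXiv:1302.0892 — 2 statements merged into one kernel-verified Lean document; each statement's English description precedes it below -/
import Mathlib

section
/- Let k > 40 be a real number and let d₁, …, d_{N} be nonnegative reals with N = k/2 (assume N a positive integer, N ≥ k/2 ≥ 20). If ∑_{i=1}^N exp(−10·d_i/k) < 3, then ∑_{i=1}^N d_i > (k²/40)·ln k. -/
theorem claim3 (k : ℝ) (hk : 40 < k) (N : ℕ) (hN : 0 < N) (hNk : (N : ℝ) = k / 2)
    (d : Fin N → ℝ) (hd : ∀ i, 0 ≤ d i)
    (hsum : ∑ i, Real.exp (-10 * d i / k) < 3) :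
    k ^ 2 / 40 * Real.log k < ∑ i, d i := by
  have hk0 : (0:ℝ) < k := by linarith
  have hN0 : (0:ℝ) < N := by rw [hNk]; linarith
  set S := ∑ i, d i with hS
  -- Jensen
  have jensen : Real.exp (∑ i : Fin N, (1/(N:ℝ)) • (-10 * d i / k)) ≤
      ∑ i : Fin N, (1/(N:ℝ)) • Real.exp (-10 * d i / k) := by
    apply convexOn_exp.map_sum_le
    · intro i _; positivity
    · simp [Finset.sum_const, Finset.card_univ]
      field_simp
    · intro i _; trivial
  have h1 : ∑ i : Fin N, (1/(N:ℝ)) • (-10 * d i / k) = (-10/(k*N)) * S := by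
    simp only [smul_eq_mul, hS, Finset.mul_sum]
    apply Finset.sum_congr rfl
    intro i _
    field_simp
  have h2 : ∑ i : Fin N, (1/(N:ℝ)) • Real.exp (-10 * d i / k)
      = (1/(N:ℝ)) * ∑ i, Real.exp (-10 * d i / k) := by
    simp [Finset.mul_sum]
  have hlt : Real.exp ((-10/(k*N)) * S) < 3 / N := by
    rw [← h1]
    calc Real.exp (∑ i : Fin N, (1/(N:ℝ)) • (-10 * d i / k))
        ≤ ∑ i : Fin N, (1/(N:ℝ)) • Real.exp (-10 * d i / k) := jensen
      _ = (1/(N:ℝ)) * ∑ i, Real.exp (-10 * d i / k) := h2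
      _ < (1/(N:ℝ)) * 3 := by
          apply mul_lt_mul_of_pos_left hsum
          positivity
      _ = 3 / N := by ring
  have hlog : (-10/(k*N)) * S < Real.log (3 / N) := by
    rw [Real.lt_log_iff_exp_lt (by positivity)]
    exact hlt
  have hlog3 : Real.log (3 / N) = Real.log 3 - Real.log N := by
    rw [Real.log_div (by norm_num) (by positivity)]
  have hlogN : Real.log N = Real.log k - Real.log 2 := by
    rw [hNk, Real.log_div (by linarith) (by norm_num)]
  -- So S > (k*N/10) * (log N - log 3)
  have hS1 : (k*N/10) * (Real.log N - Real.log 3) < S := by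
    have hkN : (0:ℝ) < k * N := by positivity
    have h := hlog
    rw [hlog3] at h
    have h' := mul_lt_mul_of_pos_left h (show (0:ℝ) < k*N/10 by positivity)
    have heq : (k*N/10) * (-10/(k*N)*S) = -S := by field_simp
    rw [heq] at h'
    linarith
  have hlog6 : Real.log 2 + Real.log 3 = Real.log 6 := by
    rw [← Real.log_mul (by norm_num) (by norm_num)]; norm_num
  have hlog36 : Real.log 36 = 2 * Real.log 6 := by
    rw [show (36:ℝ) = 6^2 by norm_num, Real.log_pow]; push_cast; ring
  have hlogk : Real.log 36 < Real.log k :=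
    Real.log_lt_log (by norm_num) (by linarith)
  -- conclude
  have hNk2 : (N:ℝ) = k/2 := hNk
  rw [hlogN] at hS1
  rw [hNk2] at hS1
  nlinarith [hS1, hlogk, hlog36, hlog6, sq_nonneg k, mul_pos (mul_pos hk0 hk0) (sub_pos.mpr hlogk)]
end

section
/- If p, q ∈ (0,1) with |p − q| ≤ 1/k and 1/4 ≤ p ≤ 3/4 and k ≥ 8, then D_KL(B_q || B_p) ≤ (32/(3·ln 2))·(1/k²). -/
/-- KL divergence between Bernoulli(q) and Bernoulli(p), in bits. -/
noncomputable def bernoulliKL (q p : ℝ) : ℝ :=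
  q * Real.logb 2 (q / p) + (1 - q) * Real.logb 2 ((1 - q) / (1 - p))

theorem kl_close_bound (p q k : ℝ) (hk : 8 ≤ k)
    (hq0 : 0 < q) (hq1 : q < 1) (hp0 : 0 < p) (hp1 : p < 1)
    (hpq : |p - q| ≤ 1 / k) (hp14 : 1/4 ≤ p) (hp34 : p ≤ 3/4) :
    bernoulliKL q p ≤ (32 / (3 * Real.log 2)) * (1 / k ^ 2) := by
  have hl2 : (0:ℝ) < Real.log 2 := Real.log_pos (by norm_num)
  have hq1' : 0 < 1 - q := by linarith
  have hp1' : 0 < 1 - p := by linarith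
  have hk0 : (0:ℝ) < k := by linarith
  have h1 : Real.log (q / p) ≤ q / p - 1 :=
    Real.log_le_sub_one_of_pos (by positivity)
  have h2 : Real.log ((1 - q) / (1 - p)) ≤ (1 - q) / (1 - p) - 1 :=
    Real.log_le_sub_one_of_pos (by positivity)
  have hnats : q * Real.log (q / p) + (1 - q) * Real.log ((1 - q) / (1 - p))
      ≤ (q - p) ^ 2 / (p * (1 - p)) := by
    have e : q * (q / p - 1) + (1 - q) * ((1 - q) / (1 - p) - 1)
        = (q - p) ^ 2 / (p * (1 - p)) := by
      field_simp
      ring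
    calc q * Real.log (q / p) + (1 - q) * Real.log ((1 - q) / (1 - p))
        ≤ q * (q / p - 1) + (1 - q) * ((1 - q) / (1 - p) - 1) := by
          gcongr <;> linarith
      _ = (q - p) ^ 2 / (p * (1 - p)) := e
  have hsq : (q - p) ^ 2 ≤ 1 / k ^ 2 := by
    have : |q - p| ≤ 1 / k := by rwa [abs_sub_comm] at hpq
    have h := sq_le_sq' (by linarith [abs_le.1 this]) (abs_le.1 this).2
    calc (q - p) ^ 2 ≤ (1 / k) ^ 2 := h
      _ = 1 / k ^ 2 := by rw [div_pow, one_pow]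
  have hdenom : (3:ℝ)/16 ≤ p * (1 - p) := by nlinarith
  have hbound : (q - p) ^ 2 / (p * (1 - p)) ≤ (32 / 3) * (1 / k ^ 2) := by
    have h1 : (q - p) ^ 2 / (p * (1 - p)) ≤ (1 / k ^ 2) / (3 / 16) := by
      gcongr
    calc (q - p) ^ 2 / (p * (1 - p)) ≤ (1 / k ^ 2) / (3 / 16) := h1
      _ = (16 / 3) * (1 / k ^ 2) := by ring
      _ ≤ (32 / 3) * (1 / k ^ 2) := by
          have : (0:ℝ) ≤ 1 / k ^ 2 := by positivity
          nlinarith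
  have key : bernoulliKL q p
      = (q * Real.log (q / p) + (1 - q) * Real.log ((1 - q) / (1 - p))) / Real.log 2 := by
    unfold bernoulliKL
    rw [Real.logb, Real.logb]
    ring
  rw [key]
  rw [div_le_iff₀ hl2]
  calc q * Real.log (q / p) + (1 - q) * Real.log ((1 - q) / (1 - p))
      ≤ (32 / 3) * (1 / k ^ 2) := le_trans hnats hbound
    _ = 32 / (3 * Real.log 2) * (1 / k ^ 2) * Real.log 2 := by
        field_simp
end
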